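/- Let A ∈ R_+^{n×n} with positive right eigenvector u and positive left eigenvector w for eigenvalue ρ > 0 with wᵀu = 1, and define the occupation measure μ_{ij} = ρ^{-1} w_i a_{ij} u_j. Then Σ_{i,j : a_{ij}>0} μ_{ij} log( a_{ij} (Σ_k μ_{ik}) / μ_{ij} ) = log ρ. -/

import Mathlib

/-- With `A u = ρ u`, `Aᵀ w = ρ w`, `wᵀ u = 1`, `u,w > 0`, `ρ > 0` and the
occupation measure `μ_{ij} = ρ⁻¹ w_i a_{ij} u_j`, one has
`Σ_{i,j : a_{ij} > 0} μ_{ij} log(a_{ij} (Σ_k μ_{ik}) / μ_{ij}) = log ρ`. -/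
theorem entropy_sum_eq_log_spectral_radius
    (n : ℕ) (A : Matrix (Fin n) (Fin n) ℝ) (hA : ∀ i j, 0 ≤ A i j)
    (u w : Fin n → ℝ) (hu : ∀ i, 0 < u i) (hw : ∀ i, 0 < w i)
    (ρ : ℝ) (hρ : 0 < ρ)
    (hAu : ∀ i, ∑ j, A i j * u j = ρ * u i)
    (hAw : ∀ j, ∑ i, A i j * w i = ρ * w j)
    (hwu : ∑ i, w i * u i = 1)
    (μ : Fin n → Fin n → ℝ) (hμ : ∀ i j, μ i j = ρ⁻¹ * w i * A i j * u j) :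
    ∑ i, ∑ j, (if 0 < A i j then μ i j * Real.log (A i j * (∑ k, μ i k) / μ i j) else 0)
      = Real.log ρ := by
  have hrow : ∀ i, ∑ k, μ i k = w i * u i := by
    intro i
    have : (∑ k, μ i k) = ρ⁻¹ * w i * ∑ k, A i k * u k := by
      rw [Finset.mul_sum]
      exact Finset.sum_congr rfl fun k _ => by rw [hμ]; ring
    rw [this, hAu i]; field_simp
  have hcol : ∀ j, ∑ i, μ i j = w j * u j := by
    intro j
    have : (∑ i, μ i j) = ρ⁻¹ * u j * ∑ i, A i j * w i := by
      rw [Finset.mul_sum]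
      exact Finset.sum_congr rfl fun i _ => by rw [hμ]; ring
    rw [this, hAw j]; field_simp
  have key : ∀ i j, (if 0 < A i j then μ i j * Real.log (A i j * (∑ k, μ i k) / μ i j) else 0)
      = μ i j * (Real.log ρ + Real.log (u i) - Real.log (u j)) := by
    intro i j
    by_cases h : 0 < A i j
    · rw [if_pos h]
      congr 1
      have hμpos : 0 < μ i j := by
        rw [hμ]; exact mul_pos (mul_pos (mul_pos (inv_pos.mpr hρ) (hw i)) h) (hu j)
      rw [hrow i]
      have hA' := ne_of_gt h
      have hw' := ne_of_gt (hw i)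
      have hu' := ne_of_gt (hu j)
      have hρ' := ne_of_gt hρ
      have harg : A i j * (w i * u i) / μ i j = ρ * u i / u j := by
        rw [hμ]; field_simp
      rw [harg, Real.log_div (ne_of_gt (mul_pos hρ (hu i))) hu',
        Real.log_mul (ne_of_gt hρ) (ne_of_gt (hu i))]
    · rw [if_neg h]
      have hz : A i j = 0 := le_antisymm (not_lt.mp h) (hA i j)
      rw [hμ, hz]; ring
  simp_rw [key]
  have e1 : ∑ i, ∑ j, μ i j * Real.log ρ = Real.log ρ := by
    have h1 : ∀ i, ∑ j, μ i j * Real.log ρ = (w i * u i) * Real.log ρ := fun i => by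
      rw [← Finset.sum_mul, hrow i]
    simp_rw [h1, ← Finset.sum_mul, hwu, one_mul]
  have e2 : ∑ i, ∑ j, μ i j * Real.log (u i) = ∑ i, (w i * u i) * Real.log (u i) := by
    refine Finset.sum_congr rfl fun i _ => ?_
    rw [← Finset.sum_mul, hrow i]
  have e3 : ∑ i, ∑ j, μ i j * Real.log (u j) = ∑ j, (w j * u j) * Real.log (u j) := by
    rw [Finset.sum_comm]
    refine Finset.sum_congr rfl fun j _ => ?_
    rw [← Finset.sum_mul, hcol j]
  calc ∑ i, ∑ j, μ i j * (Real.log ρ + Real.log (u i) - Real.log (u j))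
      = ∑ i, ∑ j, (μ i j * Real.log ρ + μ i j * Real.log (u i) - μ i j * Real.log (u j)) := by
        refine Finset.sum_congr rfl fun i _ => Finset.sum_congr rfl fun j _ => by ring
    _ = (∑ i, ∑ j, μ i j * Real.log ρ) + (∑ i, ∑ j, μ i j * Real.log (u i))
        - (∑ i, ∑ j, μ i j * Real.log (u j)) := by
        simp [Finset.sum_add_distrib, Finset.sum_sub_distrib]
    _ = Real.log ρ := by rw [e1, e2, e3]; ring
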